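/- Define recursively for finite graphs Ĝ, vertices v, and t ∈ ℕ: Φ_Ĝ(v,0) = 1; for t > 0, if v has no neighbors then Φ_Ĝ(v,t) = 1/(1+λ), and otherwise Φ_Ĝ(v,t) = (1 + λ·∏_{i=1}^{k} Φ_{Ĝ_{i-1}}(v_i, t-1))^{-1} where N(v) = {v_1,...,v_k}, Ĝ_0 is induced by V(Ĝ) \ {v}, and Ĝ_i by V(Ĝ) \ {v,v_1,...,v_i}. Define Ψ identically except Ψ_Ĝ(v,0) = 0. Then for all finite G, v, t: Ψ_G(v,2t) ≤ P_G(v ∉ I) ≤ Φ_G(v,2t) and Φ_G(v,2t+1) ≤ P_G(v ∉ I) ≤ Ψ_G(v,2t+1), where P_G is the hard-core Gibbs measure with activity λ. -/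

import Mathlib

open Finset

/-- Sequential product `f A u₁ · f (A \ {u₁}) u₂ · …` along a list of vertices. -/
noncomputable def seqProd {V : Type*} [DecidableEq V] (f : Finset V → V → ℝ) :
    Finset V → List V → ℝ
  | _, [] => 1
  | A, u :: rest => f A u * seqProd f (A.erase u) rest

/-- The recursively defined quantity `Φ` (for `base = 1`) resp. `Ψ` (for `base = 0`)
of the hard-core computation-tree recursion: `F(0, A, v) = base`; for `t > 0`,
`F(t, A, v) = 1/(1+λ)` if `v` has no neighbors in `A`, and otherwise
`F(t, A, v) = (1 + λ · ∏ᵢ F(t-1, Aᵢ₋₁, vᵢ))⁻¹` over the neighbors `v₁, …, v_k` of `v`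
in `A`, with sequential vertex deletions. -/
noncomputable def hcRec {V : Type*} [Fintype V] [LinearOrder V] (G : SimpleGraph V)
    [DecidableRel G.Adj] (lam base : ℝ) : ℕ → Finset V → V → ℝ
  | 0, _, _ => base
  | t + 1, A, v =>
    if (G.neighborFinset v ∩ A.erase v) = ∅ then (1 + lam)⁻¹
    else (1 + lam * seqProd (hcRec G lam base t) (A.erase v)
            ((G.neighborFinset v ∩ A.erase v).sort (· ≤ ·)))⁻¹

/-- Hard-core partition function of the subgraph induced on `A`. -/
noncomputable def hcZ {V : Type*} [DecidableEq V] (G : SimpleGraph V) [DecidableRel G.Adj]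
    (lam : ℝ) (A : Finset V) : ℝ :=
  ∑ I ∈ A.powerset.filter (fun I => ∀ u ∈ I, ∀ w ∈ I, ¬ G.Adj u w), lam ^ I.card

/-- Probability that `v` is unoccupied under the hard-core measure on the
subgraph induced on `A`. -/
noncomputable def hcPnot {V : Type*} [DecidableEq V] (G : SimpleGraph V) [DecidableRel G.Adj]
    (lam : ℝ) (A : Finset V) (v : V) : ℝ :=
  (∑ I ∈ A.powerset.filter (fun I => (∀ u ∈ I, ∀ w ∈ I, ¬ G.Adj u w) ∧ v ∉ I),
      lam ^ I.card) / hcZ G lam A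

section Aux
variable {V : Type*} [DecidableEq V] (G : SimpleGraph V) [DecidableRel G.Adj]
  {lam : ℝ}

lemma hcZ_pos (hlam : 0 < lam) (A : Finset V) : 0 < hcZ G lam A := by
  unfold hcZ
  apply Finset.sum_pos
  · intro I _; positivity
  · exact ⟨∅, by simp⟩

lemma filter_not_mem (A : Finset V) (v : V) :
    (A.powerset.filter (fun I => (∀ u ∈ I, ∀ w ∈ I, ¬ G.Adj u w) ∧ v ∉ I))
      = ((A.erase v).powerset.filter (fun I => ∀ u ∈ I, ∀ w ∈ I, ¬ G.Adj u w)) := by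
  ext I
  simp only [mem_filter, mem_powerset, Finset.subset_erase]
  tauto

lemma hcPnot_eq (A : Finset V) (v : V) :
    hcPnot G lam A v = hcZ G lam (A.erase v) / hcZ G lam A := by
  unfold hcPnot hcZ
  congr 1
  exact Finset.sum_congr (filter_not_mem G A v) (fun _ _ => rfl)

lemma hcZ_split' (A : Finset V) (v : V) (hv : v ∈ A) (N : Finset V)
    (hN : ∀ u, u ∈ N ↔ G.Adj v u) :
    hcZ G lam A = hcZ G lam (A.erase v)
      + lam * hcZ G lam (A \ insert v N) := by
  have hsplit := Finset.sum_filter_add_sum_filter_not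
    (A.powerset.filter (fun I => ∀ u ∈ I, ∀ w ∈ I, ¬ G.Adj u w))
    (fun I => v ∉ I) (fun I => lam ^ I.card)
  have h1 : (A.powerset.filter (fun I => ∀ u ∈ I, ∀ w ∈ I, ¬ G.Adj u w)).filter
      (fun I => v ∉ I) = ((A.erase v).powerset.filter
        (fun I => ∀ u ∈ I, ∀ w ∈ I, ¬ G.Adj u w)) := by
    ext I
    simp only [mem_filter, mem_powerset, Finset.subset_erase]
    tauto
  have h2 : ∑ I ∈ (A.powerset.filter (fun I => ∀ u ∈ I, ∀ w ∈ I, ¬ G.Adj u w)).filter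
      (fun I => ¬ v ∉ I), lam ^ I.card
      = lam * ∑ I ∈ (A \ insert v N).powerset.filter
          (fun I => ∀ u ∈ I, ∀ w ∈ I, ¬ G.Adj u w), lam ^ I.card := by
    rw [Finset.mul_sum]
    refine Finset.sum_bij' (fun I _ => I.erase v) (fun J _ => insert v J)
      ?_ ?_ ?_ ?_ ?_
    · intro I hI
      simp only [mem_filter, mem_powerset, not_not] at hI ⊢
      obtain ⟨⟨hIA, hind⟩, hvI⟩ := hI
      constructor
      · intro u hu
        rw [mem_erase] at hu
        rw [mem_sdiff, mem_insert]
        refine ⟨hIA hu.2, ?_⟩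
        push_neg
        refine ⟨hu.1, ?_⟩
        rw [hN]
        exact hind v hvI u hu.2
      · intro u hu w hw
        exact hind u (mem_of_mem_erase hu) w (mem_of_mem_erase hw)
    · intro J hJ
      simp only [mem_filter, mem_powerset, not_not] at hJ ⊢
      obtain ⟨hJB, hind⟩ := hJ
      have hvJ : v ∉ J := by
        intro hvJ
        have := hJB hvJ
        rw [mem_sdiff, mem_insert] at this
        exact this.2 (Or.inl rfl)
      have hnadj : ∀ u ∈ J, ¬ G.Adj v u := by
        intro u hu hadj
        have := hJB hu
        rw [mem_sdiff, mem_insert] at this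
        exact this.2 (Or.inr ((hN u).mpr hadj))
      refine ⟨⟨?_, ?_⟩, mem_insert_self _ _⟩
      · intro u hu
        rw [mem_insert] at hu
        rcases hu with rfl | hu
        · exact hv
        · exact (mem_sdiff.mp (hJB hu)).1
      · intro u hu w hw
        rw [mem_insert] at hu hw
        rcases hu with rfl | hu <;> rcases hw with rfl | hw
        · exact fun h => G.loopless.irrefl _ h
        · exact hnadj w hw
        · exact fun h => hnadj u hu h.symm
        · exact hind u hu w hw
    · intro I hI
      simp only [mem_filter, not_not] at hI
      exact Finset.insert_erase hI.2
    · intro J hJ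
      simp only [mem_filter, mem_powerset] at hJ
      have hvJ : v ∉ J := by
        intro hvJ
        have := hJ.1 hvJ
        rw [mem_sdiff, mem_insert] at this
        exact this.2 (Or.inl rfl)
      exact Finset.erase_insert hvJ
    · intro I hI
      simp only [mem_filter, not_not] at hI
      rw [← Finset.card_erase_add_one hI.2, pow_succ]
      ring
  unfold hcZ
  rw [h1, h2] at hsplit
  exact hsplit.symm

end Aux

section Fin
variable {V : Type*} [Fintype V] [DecidableEq V] (G : SimpleGraph V) [DecidableRel G.Adj]
  {lam : ℝ}

lemma hcZ_split (A : Finset V) (v : V) (hv : v ∈ A) :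
    hcZ G lam A = hcZ G lam (A.erase v)
      + lam * hcZ G lam (A \ insert v (G.neighborFinset v)) :=
  hcZ_split' G A v hv _ (fun u => G.mem_neighborFinset v u)

end Fin

section Tele
variable {V : Type*} [DecidableEq V] (G : SimpleGraph V) [DecidableRel G.Adj]
  {lam : ℝ}

lemma foldl_erase_eq (L : List V) : ∀ B : Finset V,
    List.foldl Finset.erase B L = B \ L.toFinset := by
  induction L with
  | nil => intro B; simp
  | cons u L ih =>
    intro B
    simp only [List.foldl_cons, ih, List.toFinset_cons]
    ext w
    simp only [mem_sdiff, mem_erase, mem_insert]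
    tauto

lemma seqProd_hcPnot (hlam : 0 < lam) : ∀ (L : List V) (B : Finset V), L.Nodup →
    (∀ u ∈ L, u ∈ B) →
    seqProd (hcPnot G lam) B L = hcZ G lam (B \ L.toFinset) / hcZ G lam B := by
  intro L
  induction L with
  | nil =>
    intro B _ _
    simp [seqProd, div_self (hcZ_pos G hlam B).ne']
  | cons u L ih =>
    intro B hnd hmem
    have hu : u ∈ B := hmem u List.mem_cons_self
    have hmem' : ∀ w ∈ L, w ∈ B.erase u := by
      intro w hw
      exact mem_erase.mpr ⟨fun h => (List.nodup_cons.mp hnd).1 (h ▸ hw),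
        hmem w (List.mem_cons_of_mem u hw)⟩
    have hset : B.erase u \ L.toFinset = B \ (u :: L).toFinset := by
      ext w
      simp only [mem_sdiff, mem_erase, List.toFinset_cons, mem_insert]
      tauto
    simp only [seqProd]
    rw [hcPnot_eq, ih (B.erase u) (List.nodup_cons.mp hnd).2 hmem', hset]
    have h1 : hcZ G lam (B.erase u) ≠ 0 := (hcZ_pos G hlam _).ne'
    have h2 : hcZ G lam B ≠ 0 := (hcZ_pos G hlam _).ne'
    field_simp

end Tele

section Rec
variable {V : Type*} [Fintype V] [LinearOrder V] (G : SimpleGraph V) [DecidableRel G.Adj]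
  {lam : ℝ}

lemma hcPnot_rec (hlam : 0 < lam) (A : Finset V) (v : V) (hv : v ∈ A) :
    hcPnot G lam A v = (1 + lam * seqProd (hcPnot G lam) (A.erase v)
      ((G.neighborFinset v ∩ A.erase v).sort (· ≤ ·)))⁻¹ := by
  set L := (G.neighborFinset v ∩ A.erase v).sort (· ≤ ·) with hL
  have hnd : L.Nodup := Finset.sort_nodup _ _
  have hmem : ∀ u ∈ L, u ∈ A.erase v := by
    intro u hu
    exact (mem_inter.mp ((Finset.mem_sort _).mp hu)).2
  rw [seqProd_hcPnot G hlam L (A.erase v) hnd hmem]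
  have htf : L.toFinset = G.neighborFinset v ∩ A.erase v := Finset.sort_toFinset _ _
  have hset : A.erase v \ L.toFinset = A \ insert v (G.neighborFinset v) := by
    rw [htf]
    ext w
    simp only [mem_sdiff, mem_erase, mem_inter, mem_insert]
    tauto
  rw [hset, hcPnot_eq, hcZ_split G A v hv]
  have h0 : 0 < hcZ G lam (A.erase v) := hcZ_pos G hlam _
  have h1 : 0 < hcZ G lam (A \ insert v (G.neighborFinset v)) := hcZ_pos G hlam _
  have hs : (0:ℝ) < hcZ G lam (A.erase v)
      + lam * hcZ G lam (A \ insert v (G.neighborFinset v)) := by positivity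
  have ht : (0:ℝ) < 1 + lam * (hcZ G lam (A \ insert v (G.neighborFinset v))
      / hcZ G lam (A.erase v)) := by positivity
  rw [inv_eq_one_div, div_eq_div_iff hs.ne' ht.ne']
  field_simp

end Rec

section Mono
variable {V : Type*} [DecidableEq V]

lemma seqProd_nonneg (f : Finset V → V → ℝ) (hf : ∀ B u, 0 ≤ f B u) :
    ∀ (L : List V) (B : Finset V), 0 ≤ seqProd f B L := by
  intro L
  induction L with
  | nil => intro B; simp [seqProd]
  | cons u L ih => intro B; exact mul_nonneg (hf B u) (ih (B.erase u))

lemma seqProd_mono {f g : Finset V → V → ℝ} (hf : ∀ B u, 0 ≤ f B u)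
    (hfg : ∀ B u, u ∈ B → f B u ≤ g B u) :
    ∀ (L : List V) (B : Finset V), L.Nodup → (∀ u ∈ L, u ∈ B) →
      seqProd f B L ≤ seqProd g B L := by
  intro L
  induction L with
  | nil => intro B _ _; simp [seqProd]
  | cons u L ih =>
    intro B hnd hmem
    have hu : u ∈ B := hmem u List.mem_cons_self
    have hmem' : ∀ w ∈ L, w ∈ B.erase u := fun w hw =>
      mem_erase.mpr ⟨fun h => (List.nodup_cons.mp hnd).1 (h ▸ hw),
        hmem w (List.mem_cons_of_mem u hw)⟩
    simp only [seqProd]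
    exact mul_le_mul (hfg B u hu)
      (ih (B.erase u) (List.nodup_cons.mp hnd).2 hmem')
      (seqProd_nonneg f hf L (B.erase u))
      (le_trans (hf B u) (hfg B u hu))

end Mono

section Main
variable {V : Type*} [Fintype V] [LinearOrder V] (G : SimpleGraph V) [DecidableRel G.Adj]
  {lam : ℝ}

lemma hcPnot_nonneg (hlam : 0 < lam) (A : Finset V) (v : V) :
    0 ≤ hcPnot G lam A v := by
  rw [hcPnot_eq]
  exact div_nonneg (hcZ_pos G hlam _).le (hcZ_pos G hlam _).le

lemma hcPnot_le_one (hlam : 0 < lam) (A : Finset V) (v : V) (hv : v ∈ A) :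
    hcPnot G lam A v ≤ 1 := by
  rw [hcPnot_eq]
  rw [div_le_one (hcZ_pos G hlam _)]
  rw [hcZ_split G A v hv]
  have := hcZ_pos G (lam := lam) hlam (A \ insert v (G.neighborFinset v))
  nlinarith

lemma hcRec_nonneg (hlam : 0 < lam) {base : ℝ} (hb : 0 ≤ base) :
    ∀ (t : ℕ) (A : Finset V) (v : V), 0 ≤ hcRec G lam base t A v := by
  intro t
  induction t with
  | zero => intro A v; simpa [hcRec] using hb
  | succ t ih =>
    intro A v
    rw [hcRec]
    split
    · positivity
    · have := seqProd_nonneg (hcRec G lam base t) (fun B u => ih B u)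
        ((G.neighborFinset v ∩ A.erase v).sort (· ≤ ·)) (A.erase v)
      positivity

/-- Generic step inequality. -/
lemma step_le (hlam : 0 < lam) {f g : Finset V → V → ℝ}
    (hf0 : ∀ B u, 0 ≤ f B u) (hg0 : ∀ B u, 0 ≤ g B u)
    (hfg : ∀ B u, u ∈ B → f B u ≤ g B u)
    {B : Finset V} {L : List V} (hnd : L.Nodup) (hmem : ∀ u ∈ L, u ∈ B) :
    (1 + lam * seqProd g B L)⁻¹ ≤ (1 + lam * seqProd f B L)⁻¹ := by
  have hS : seqProd f B L ≤ seqProd g B L := seqProd_mono hf0 hfg L B hnd hmem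
  have h0 : 0 ≤ seqProd f B L := seqProd_nonneg f hf0 L B
  have h1 : (0:ℝ) < 1 + lam * seqProd f B L := by positivity
  have h2 : 1 + lam * seqProd f B L ≤ 1 + lam * seqProd g B L := by nlinarith
  exact inv_anti₀ h1 h2

lemma hc_main (hlam : 0 < lam) : ∀ (t : ℕ) (A : Finset V) (v : V), v ∈ A →
    (Even t → hcRec G lam 0 t A v ≤ hcPnot G lam A v
      ∧ hcPnot G lam A v ≤ hcRec G lam 1 t A v)
    ∧ (Odd t → hcRec G lam 1 t A v ≤ hcPnot G lam A v
      ∧ hcPnot G lam A v ≤ hcRec G lam 0 t A v) := by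
  intro t
  induction t with
  | zero =>
    intro A v hv
    refine ⟨fun _ => ⟨?_, ?_⟩, fun h => absurd h (by simp)⟩
    · simpa [hcRec] using hcPnot_nonneg G hlam A v
    · simpa [hcRec] using hcPnot_le_one G hlam A v hv
  | succ t ih =>
    intro A v hv
    have hrec := hcPnot_rec G hlam A v hv
    have hnd : ((G.neighborFinset v ∩ A.erase v).sort (· ≤ ·)).Nodup :=
      Finset.sort_nodup _ _
    have hmem : ∀ u ∈ (G.neighborFinset v ∩ A.erase v).sort (· ≤ ·), u ∈ A.erase v :=
      fun u hu => (mem_inter.mp ((Finset.mem_sort _).mp hu)).2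
    have hmemA : ∀ u ∈ (G.neighborFinset v ∩ A.erase v).sort (· ≤ ·), u ∈ A.erase v := hmem
    by_cases hE : (G.neighborFinset v ∩ A.erase v) = ∅
    · have hL : (G.neighborFinset v ∩ A.erase v).sort (· ≤ ·) = [] := by
        rw [hE]; exact Finset.sort_empty _
      have hP : hcPnot G lam A v = (1 + lam)⁻¹ := by
        rw [hrec, hL]; simp [seqProd]
      constructor <;> intro _ <;>
        simp only [hcRec, if_pos hE, hP] <;> exact ⟨le_refl _, le_refl _⟩
    · have hmemB : ∀ u ∈ (G.neighborFinset v ∩ A.erase v).sort (· ≤ ·),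
          u ∈ A.erase v := hmem
      constructor
      · -- Even (t+1) : t is odd
        intro hev
        have hot : Odd t := by
          rcases hev with ⟨k, hk⟩
          exact ⟨k - 1, by omega⟩
        have hΦ : ∀ B u, u ∈ B → hcRec G lam 1 t B u ≤ hcPnot G lam B u :=
          fun B u hu => ((ih B u hu).2 hot).1
        have hΨ : ∀ B u, u ∈ B → hcPnot G lam B u ≤ hcRec G lam 0 t B u :=
          fun B u hu => ((ih B u hu).2 hot).2
        constructor
        · -- Ψ(t+1) ≤ P
          rw [hcRec, if_neg hE, hrec]
          exact step_le hlam (hcPnot_nonneg G hlam) (hcRec_nonneg G hlam le_rfl t)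
            hΨ hnd hmem
        · -- P ≤ Φ(t+1)
          rw [hcRec, if_neg hE, hrec]
          exact step_le hlam (hcRec_nonneg G hlam zero_le_one t)
            (hcPnot_nonneg G hlam) hΦ hnd hmem
      · -- Odd (t+1) : t is even
        intro hod
        have hev : Even t := by
          rcases hod with ⟨k, hk⟩
          exact ⟨k, by omega⟩
        have hΨ : ∀ B u, u ∈ B → hcRec G lam 0 t B u ≤ hcPnot G lam B u :=
          fun B u hu => ((ih B u hu).1 hev).1
        have hΦ : ∀ B u, u ∈ B → hcPnot G lam B u ≤ hcRec G lam 1 t B u :=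
          fun B u hu => ((ih B u hu).1 hev).2
        constructor
        · -- Φ(t+1) ≤ P
          rw [hcRec, if_neg hE, hrec]
          exact step_le hlam (hcPnot_nonneg G hlam) (hcRec_nonneg G hlam zero_le_one t)
            hΦ hnd hmem
        · -- P ≤ Ψ(t+1)
          rw [hcRec, if_neg hE, hrec]
          exact step_le hlam (hcRec_nonneg G hlam le_rfl t)
            (hcPnot_nonneg G hlam) hΨ hnd hmem

end Main


/-- With `Φ = hcRec G λ 1` and `Ψ = hcRec G λ 0`, for every finite graph
`G`, vertex `v` and `t ∈ ℕ`: `Ψ(2t) ≤ P_G(v ∉ I) ≤ Φ(2t)` and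
`Φ(2t+1) ≤ P_G(v ∉ I) ≤ Ψ(2t+1)`. -/
theorem hardcore_recursive_bounds {V : Type*} [Fintype V] [LinearOrder V]
    (G : SimpleGraph V) [DecidableRel G.Adj] (lam : ℝ) (hlam : 0 < lam)
    (v : V) (t : ℕ) :
    (hcRec G lam 0 (2 * t) Finset.univ v ≤ hcPnot G lam Finset.univ v
      ∧ hcPnot G lam Finset.univ v ≤ hcRec G lam 1 (2 * t) Finset.univ v)
    ∧ (hcRec G lam 1 (2 * t + 1) Finset.univ v ≤ hcPnot G lam Finset.univ v
      ∧ hcPnot G lam Finset.univ v ≤ hcRec G lam 0 (2 * t + 1) Finset.univ v) := by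
  refine ⟨(hc_main G hlam (2 * t) Finset.univ v (mem_univ v)).1 ⟨t, by ring⟩,
    (hc_main G hlam (2 * t + 1) Finset.univ v (mem_univ v)).2 ⟨t, by ring⟩⟩
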